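/- If an open set S ⊆ ℝ³ is 3-dimensionally δ-sparse around a point x₀ at scale r (i.e. μ₃(S ∩ B_r(x₀)) ≤ δ · μ₃(B_r(x₀))), then S is 1-dimensionally δ^{1/3}-sparse around x₀ at scale r, i.e. there exists a unit vector ν such that μ₁(S ∩ (x₀ − rν, x₀ + rν)) ≤ δ^{1/3} · 2r. -/

import Mathlib

open MeasureTheory Metric Set

open ENNReal

local notation "E3" => EuclideanSpace ℝ (Fin 3)

private lemma polar_slice' (U : Set (EuclideanSpace ℝ (Fin 3))) (hU : MeasurableSet U) :
    ∫⁻ y : EuclideanSpace ℝ (Fin 3), U.indicator 1 y * (ENNReal.ofReal ‖y‖ ^ 2)⁻¹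
      = ∫⁻ ν : sphere (0 : EuclideanSpace ℝ (Fin 3)) 1,
          volume {t : ℝ | t ∈ Ioi 0 ∧ t • (ν : EuclideanSpace ℝ (Fin 3)) ∈ U}
          ∂(volume : Measure (EuclideanSpace ℝ (Fin 3))).toSphere := by
  set μ : Measure E3 := volume
  set f : E3 → ℝ≥0∞ := fun y => U.indicator 1 y * (ENNReal.ofReal ‖y‖ ^ 2)⁻¹ with hf
  have hfm : Measurable f := by
    apply Measurable.mul
    · exact (measurable_one.indicator hU)
    · exact ((measurable_norm.ennreal_ofReal.pow_const 2).inv)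
  have hdim : Module.finrank ℝ E3 = 3 := finrank_euclideanSpace_fin
  have mp := (μ.measurePreserving_homeomorphUnitSphereProd)
  rw [hdim] at mp
  have h1 : ∫⁻ y : E3, f y ∂μ = ∫⁻ x : ({0}ᶜ : Set E3), f ↑x ∂(μ.comap (↑)) := by
    rw [lintegral_subtype_comap (measurableSet_singleton (0:E3)).compl f]
    rw [← setLIntegral_univ]
    exact (setLIntegral_congr (ae_eq_univ.2 (by simp))).symm
  have hg : Measurable fun p : sphere (0:E3) 1 × Ioi (0:ℝ) => f (p.2.1 • (p.1 : E3)) :=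
    hfm.comp ((continuous_subtype_val.comp continuous_snd).smul
      (continuous_subtype_val.comp continuous_fst)).measurable
  have h2 : ∫⁻ x : ({0}ᶜ : Set E3), f ↑x ∂(μ.comap (↑))
      = ∫⁻ p : sphere (0:E3) 1 × Ioi (0:ℝ), f (p.2.1 • (p.1 : E3))
          ∂((μ.toSphere).prod (.volumeIoiPow 2)) := by
    rw [← mp.lintegral_comp hg]
    congr 1
    ext x
    have hx : (x : E3) ≠ 0 := x.2
    simp only [homeomorphUnitSphereProd_apply_fst_coe, homeomorphUnitSphereProd_apply_snd_coe]
    rw [smul_inv_smul₀ (norm_ne_zero_iff.2 hx)]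
  rw [h1, h2, lintegral_prod _ hg.aemeasurable]
  congr 1
  ext ν
  have hVm : MeasurableSet {t : ℝ | t • (ν:E3) ∈ U} :=
    (measurable_id.smul_const (ν:E3)) hU
  calc ∫⁻ t : Ioi (0:ℝ), f (t.1 • (ν : E3)) ∂(Measure.volumeIoiPow 2)
      = ∫⁻ t : Ioi (0:ℝ), ENNReal.ofReal (t.1 ^ 2) * f (t.1 • (ν : E3))
          ∂(Measure.comap Subtype.val volume) := by
        rw [Measure.volumeIoiPow, lintegral_withDensity_eq_lintegral_mul]
        · rfl
        · exact (measurable_subtype_coe.pow_const 2).ennreal_ofReal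
        · exact hfm.comp (measurable_subtype_coe.smul_const (ν:E3))
    _ = ∫⁻ t in Ioi (0:ℝ), ENNReal.ofReal (t ^ 2) * f (t • (ν : E3)) :=
        lintegral_subtype_comap measurableSet_Ioi
          (fun t : ℝ => ENNReal.ofReal (t ^ 2) * f (t • (ν:E3)))
    _ = ∫⁻ t in Ioi (0:ℝ), {t : ℝ | t • (ν:E3) ∈ U}.indicator 1 t := by
        refine setLIntegral_congr_fun measurableSet_Ioi ?_
        intro t ht
        have ht0 : (0:ℝ) < t := ht
        have hn : ‖t • (ν : E3)‖ = t := by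
          rw [norm_smul, mem_sphere_zero_iff_norm.1 ν.2, mul_one, Real.norm_eq_abs,
            abs_of_pos ht0]
        have hne : ENNReal.ofReal (t ^ 2) ≠ 0 := by
          simp [ENNReal.ofReal_eq_zero, not_le, pow_pos ht0, ht0.ne']
        have hnt : ENNReal.ofReal (t ^ 2) ≠ ∞ := ENNReal.ofReal_ne_top
        simp only [hf, hn, ← ENNReal.ofReal_pow ht0.le]
        rw [mul_comm (U.indicator 1 _), ← mul_assoc, ENNReal.mul_inv_cancel hne hnt, one_mul]
        by_cases h : t • (ν:E3) ∈ U <;> simp [h]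
    _ = volume {t : ℝ | t ∈ Ioi 0 ∧ t • (ν:E3) ∈ U} := by
        rw [lintegral_indicator hVm]
        simp only [Pi.one_apply]
        rw [setLIntegral_one, Measure.restrict_apply hVm]
        congr 1
        ext t
        simp only [mem_inter_iff, mem_setOf_eq, mem_Ioi]
        tauto

private lemma bathtub' (ρ : ℝ) (V : Set (EuclideanSpace ℝ (Fin 3))) (hV : MeasurableSet V)
    (hVB : volume V ≤ volume (ball (0 : EuclideanSpace ℝ (Fin 3)) ρ)) :
    ∫⁻ y : EuclideanSpace ℝ (Fin 3), V.indicator 1 y * (ENNReal.ofReal ‖y‖ ^ 2)⁻¹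
      ≤ ∫⁻ y : EuclideanSpace ℝ (Fin 3),
          (ball (0 : EuclideanSpace ℝ (Fin 3)) ρ).indicator 1 y
            * (ENNReal.ofReal ‖y‖ ^ 2)⁻¹ := by
  set w : E3 → ℝ≥0∞ := fun y => (ENNReal.ofReal ‖y‖ ^ 2)⁻¹ with hw
  have hwm : Measurable w := (measurable_norm.ennreal_ofReal.pow_const 2).inv
  set B : Set E3 := ball (0:E3) ρ with hB
  have hBm : MeasurableSet B := measurableSet_ball
  have hind : ∀ A : Set E3, MeasurableSet A →
      ∫⁻ y : E3, A.indicator 1 y * w y = ∫⁻ y in A, w y := by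
    intro A hA
    rw [← lintegral_indicator hA]
    congr 1; ext y
    by_cases h : y ∈ A <;> simp [h]
  rw [hind V hV, hind B hBm]
  set c : ℝ≥0∞ := (ENNReal.ofReal ρ ^ 2)⁻¹ with hc
  have hbound1 : ∫⁻ y in V \ B, w y ≤ c * volume (V \ B) := by
    rw [← setLIntegral_const]
    refine setLIntegral_mono measurable_const fun y hy => ?_
    have : ρ ≤ ‖y‖ := by
      by_contra h
      exact hy.2 (mem_ball_zero_iff.2 (lt_of_not_ge h))
    exact ENNReal.inv_le_inv.2 (pow_le_pow_left₀ (by simp) (ENNReal.ofReal_le_ofReal this) 2)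
  have hbound2 : c * volume (B \ V) ≤ ∫⁻ y in B \ V, w y := by
    rw [← setLIntegral_const]
    refine setLIntegral_mono hwm fun y hy => ?_
    have : ‖y‖ ≤ ρ := (mem_ball_zero_iff.1 hy.1).le
    exact ENNReal.inv_le_inv.2 (pow_le_pow_left₀ (by simp) (ENNReal.ofReal_le_ofReal this) 2)
  have hdiff : volume (V \ B) ≤ volume (B \ V) := by
    have h1 : volume (V \ B) + volume (V ∩ B) = volume V := measure_diff_add_inter V hBm
    have h2 : volume (B \ V) + volume (V ∩ B) = volume B := by
      rw [inter_comm V B]; exact measure_diff_add_inter B hV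
    have hfin : volume (V ∩ B) ≠ ∞ :=
      (lt_of_le_of_lt (measure_mono inter_subset_right) measure_ball_lt_top).ne
    rw [← ENNReal.add_le_add_iff_right hfin, h1, h2]
    exact hVB
  calc ∫⁻ y in V, w y = (∫⁻ y in V ∩ B, w y) + ∫⁻ y in V \ B, w y := by
        rw [lintegral_inter_add_diff w V hBm]
    _ ≤ (∫⁻ y in V ∩ B, w y) + c * volume (B \ V) :=
        add_le_add_right (hbound1.trans (mul_le_mul_right hdiff c)) _
    _ ≤ (∫⁻ y in V ∩ B, w y) + ∫⁻ y in B \ V, w y := add_le_add_right hbound2 _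
    _ = (∫⁻ y in B ∩ V, w y) + ∫⁻ y in B \ V, w y := by rw [inter_comm]
    _ = ∫⁻ y in B, w y := lintegral_inter_add_diff w B hV


/-- If an open set `S ⊆ ℝ³` is 3D `δ`-sparse around `x₀` at scale `r`, then it is
1D `δ^(1/3)`-sparse around `x₀` at scale `r`: there is a unit vector `ν` such that the
1-dimensional measure of `{t ∈ (-r, r) | x₀ + t • ν ∈ S}` is at most `δ^(1/3) · 2r`. -/
theorem sparse3D_implies_sparse1D
    (S : Set (EuclideanSpace ℝ (Fin 3))) (hS : IsOpen S)
    (x₀ : EuclideanSpace ℝ (Fin 3)) (δ r : ℝ) (hδ : δ ∈ Set.Ioo (0:ℝ) 1) (hr : 0 < r)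
    (hsparse : volume (S ∩ ball x₀ r) ≤ ENNReal.ofReal δ * volume (ball x₀ r)) :
    ∃ ν : EuclideanSpace ℝ (Fin 3), ‖ν‖ = 1 ∧
      volume {t : ℝ | t ∈ Set.Ioo (-r) r ∧ x₀ + t • ν ∈ S}
        ≤ ENNReal.ofReal (δ ^ ((1:ℝ)/3) * (2 * r)) := by
  obtain ⟨hδ0, hδ1⟩ := hδ
  set ρ : ℝ := δ ^ ((1:ℝ)/3) * r with hρdef
  have hρ0 : 0 < ρ := mul_pos (Real.rpow_pos_of_pos hδ0 _) hr
  have hdim : Module.finrank ℝ E3 = 3 := finrank_euclideanSpace_fin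
  set T : Set E3 := S ∩ ball x₀ r with hT
  have hTo : IsOpen T := hS.inter isOpen_ball
  set U₁ : Set E3 := (fun y => x₀ + y) ⁻¹' T with hU₁
  have hU₁o : IsOpen U₁ := hTo.preimage (by fun_prop)
  set U₂ : Set E3 := -U₁ with hU₂
  have hU₂o : IsOpen U₂ := hU₁o.neg
  set B : Set E3 := ball (0 : E3) ρ with hBdef
  have hρ3 : ρ ^ 3 = δ * r ^ 3 := by
    rw [hρdef, mul_pow, ← Real.rpow_natCast (δ ^ ((1:ℝ)/3)) 3, ← Real.rpow_mul hδ0.le]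
    norm_num
  have hvolB : volume B = ENNReal.ofReal δ * volume (ball x₀ r) := by
    rw [hBdef, Measure.addHaar_ball _ _ hρ0.le, Measure.addHaar_ball _ x₀ hr.le, hdim, hρ3,
      ENNReal.ofReal_mul hδ0.le, mul_assoc]
  have hvolU₁ : volume U₁ ≤ volume B := by
    rw [hU₁, measure_preimage_add, hvolB]
    exact hsparse
  have hvolU₂ : volume U₂ ≤ volume B := by
    rw [hU₂, Measure.measure_neg]
    exact hvolU₁
  set σ := (volume : Measure E3).toSphere with hσ
  have hAm : ∀ U : Set E3, IsOpen U →
      Measurable (fun ν : sphere (0 : E3) 1 =>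
        volume {t : ℝ | t ∈ Ioi 0 ∧ t • (ν : E3) ∈ U}) := by
    intro U hU
    have hs : MeasurableSet {p : sphere (0 : E3) 1 × ℝ |
        p.2 ∈ Ioi 0 ∧ p.2 • (p.1 : E3) ∈ U} :=
      ((isOpen_Ioi.preimage continuous_snd).inter
        (hU.preimage (continuous_snd.smul
          (continuous_subtype_val.comp continuous_fst)))).measurableSet
    exact measurable_measure_prodMk_left hs
  -- slice is controlled by the two positive-time slices
  have hD : ∀ ν : sphere (0 : E3) 1,
      volume {t : ℝ | t ∈ Set.Ioo (-r) r ∧ x₀ + t • (ν : E3) ∈ S}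
        ≤ volume {t : ℝ | t ∈ Ioi 0 ∧ t • (ν : E3) ∈ U₁}
          + volume {t : ℝ | t ∈ Ioi 0 ∧ t • (ν : E3) ∈ U₂} := by
    intro ν
    have hν1 : ‖(ν : E3)‖ = 1 := mem_sphere_zero_iff_norm.1 ν.2
    have hdist : ∀ t : ℝ, dist (x₀ + t • (ν : E3)) x₀ = |t| := by
      intro t
      rw [dist_eq_norm, add_sub_cancel_left, norm_smul, hν1, mul_one, Real.norm_eq_abs]
    have hsub : {t : ℝ | t ∈ Set.Ioo (-r) r ∧ x₀ + t • (ν : E3) ∈ S}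
        ⊆ {t : ℝ | t ∈ Ioi 0 ∧ t • (ν : E3) ∈ U₁}
          ∪ (-{t : ℝ | t ∈ Ioi 0 ∧ t • (ν : E3) ∈ U₂} ∪ {0}) := by
      intro t ht
      obtain ⟨⟨ht1, ht2⟩, hts⟩ := ht
      rcases lt_trichotomy 0 t with h | h | h
      · left
        refine ⟨h, ?_⟩
        show x₀ + t • (ν : E3) ∈ T
        refine ⟨hts, mem_ball.2 ?_⟩
        rw [hdist t]
        exact abs_lt.2 ⟨ht1, ht2⟩
      · right; right; simp [← h]
      · right; left
        rw [Set.mem_neg]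
        refine ⟨by simpa using h, ?_⟩
        show (-t) • (ν : E3) ∈ U₂
        rw [hU₂, Set.mem_neg, neg_smul, neg_neg]
        show x₀ + t • (ν : E3) ∈ T
        refine ⟨hts, mem_ball.2 ?_⟩
        rw [hdist t]
        exact abs_lt.2 ⟨ht1, ht2⟩
    calc volume {t : ℝ | t ∈ Set.Ioo (-r) r ∧ x₀ + t • (ν : E3) ∈ S}
        ≤ volume ({t : ℝ | t ∈ Ioi 0 ∧ t • (ν : E3) ∈ U₁}
            ∪ (-{t : ℝ | t ∈ Ioi 0 ∧ t • (ν : E3) ∈ U₂} ∪ {0})) := measure_mono hsub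
      _ ≤ volume {t : ℝ | t ∈ Ioi 0 ∧ t • (ν : E3) ∈ U₁}
            + volume (-{t : ℝ | t ∈ Ioi 0 ∧ t • (ν : E3) ∈ U₂} ∪ {0}) := measure_union_le _ _
      _ ≤ volume {t : ℝ | t ∈ Ioi 0 ∧ t • (ν : E3) ∈ U₁}
            + (volume (-{t : ℝ | t ∈ Ioi 0 ∧ t • (ν : E3) ∈ U₂}) + volume ({0} : Set ℝ)) :=
          add_le_add_right (measure_union_le _ _) _
      _ = volume {t : ℝ | t ∈ Ioi 0 ∧ t • (ν : E3) ∈ U₁}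
            + volume {t : ℝ | t ∈ Ioi 0 ∧ t • (ν : E3) ∈ U₂} := by
          rw [Measure.measure_neg, measure_singleton, add_zero]
  -- the ball slices
  have hABall : ∀ ν : sphere (0 : E3) 1,
      volume {t : ℝ | t ∈ Ioi 0 ∧ t • (ν : E3) ∈ B} = ENNReal.ofReal ρ := by
    intro ν
    have hν1 : ‖(ν : E3)‖ = 1 := mem_sphere_zero_iff_norm.1 ν.2
    have : {t : ℝ | t ∈ Ioi 0 ∧ t • (ν : E3) ∈ B} = Ioo 0 ρ := by
      ext t
      simp only [mem_setOf_eq, mem_Ioi, hBdef, mem_ball_zero_iff, norm_smul, hν1, mul_one,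
        Real.norm_eq_abs, mem_Ioo]
      constructor
      · rintro ⟨h1, h2⟩; exact ⟨h1, by rwa [abs_of_pos h1] at h2⟩
      · rintro ⟨h1, h2⟩; exact ⟨h1, by rwa [abs_of_pos h1]⟩
    rw [this, Real.volume_Ioo, sub_zero]
  -- integral bounds
  have hI : ∀ U : Set E3, IsOpen U → volume U ≤ volume B →
      ∫⁻ ν : sphere (0 : E3) 1, volume {t : ℝ | t ∈ Ioi 0 ∧ t • (ν : E3) ∈ U} ∂σ
        ≤ ENNReal.ofReal ρ * σ univ := by
    intro U hU hUB
    calc ∫⁻ ν : sphere (0 : E3) 1, volume {t : ℝ | t ∈ Ioi 0 ∧ t • (ν : E3) ∈ U} ∂σ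
        = ∫⁻ y : E3, U.indicator 1 y * (ENNReal.ofReal ‖y‖ ^ 2)⁻¹ :=
          (polar_slice' U hU.measurableSet).symm
      _ ≤ ∫⁻ y : E3, B.indicator 1 y * (ENNReal.ofReal ‖y‖ ^ 2)⁻¹ :=
          bathtub' ρ U hU.measurableSet hUB
      _ = ∫⁻ ν : sphere (0 : E3) 1, volume {t : ℝ | t ∈ Ioi 0 ∧ t • (ν : E3) ∈ B} ∂σ :=
          polar_slice' B measurableSet_ball
      _ = ∫⁻ _ : sphere (0 : E3) 1, ENNReal.ofReal ρ ∂σ := by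
          exact lintegral_congr hABall
      _ = ENNReal.ofReal ρ * σ univ := lintegral_const _
  have htotal : ∫⁻ ν : sphere (0 : E3) 1,
      (volume {t : ℝ | t ∈ Ioi 0 ∧ t • (ν : E3) ∈ U₁}
        + volume {t : ℝ | t ∈ Ioi 0 ∧ t • (ν : E3) ∈ U₂}) ∂σ
      ≤ ENNReal.ofReal (2 * ρ) * σ univ := by
    rw [lintegral_add_left (hAm U₁ hU₁o)]
    calc (∫⁻ ν : sphere (0 : E3) 1, volume {t : ℝ | t ∈ Ioi 0 ∧ t • (ν : E3) ∈ U₁} ∂σ)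
          + ∫⁻ ν : sphere (0 : E3) 1, volume {t : ℝ | t ∈ Ioi 0 ∧ t • (ν : E3) ∈ U₂} ∂σ
        ≤ ENNReal.ofReal ρ * σ univ + ENNReal.ofReal ρ * σ univ :=
          add_le_add (hI U₁ hU₁o hvolU₁) (hI U₂ hU₂o hvolU₂)
      _ = ENNReal.ofReal (2 * ρ) * σ univ := by
          rw [← add_mul, ← ENNReal.ofReal_add hρ0.le hρ0.le, two_mul]
  have hσfin : σ univ ≠ ∞ := measure_ne_top σ univ
  have hσ0 : σ univ ≠ 0 := by
    rw [hσ, Measure.toSphere_apply_univ, hdim]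
    refine mul_ne_zero (by norm_num) ?_
    exact (measure_ball_pos volume (0 : E3) one_pos).ne'
  obtain ⟨ν, hν⟩ := exists_le_laverage (Measure.measure_univ_ne_zero.1 hσ0)
    ((hAm U₁ hU₁o).add (hAm U₂ hU₂o)).aemeasurable
  rw [laverage_eq] at hν
  refine ⟨(ν : E3), mem_sphere_zero_iff_norm.1 ν.2, ?_⟩
  have hfinal : volume {t : ℝ | t ∈ Set.Ioo (-r) r ∧ x₀ + t • (ν : E3) ∈ S}
      ≤ ENNReal.ofReal (2 * ρ) := by
    calc volume {t : ℝ | t ∈ Set.Ioo (-r) r ∧ x₀ + t • (ν : E3) ∈ S}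
        ≤ volume {t : ℝ | t ∈ Ioi 0 ∧ t • (ν : E3) ∈ U₁}
          + volume {t : ℝ | t ∈ Ioi 0 ∧ t • (ν : E3) ∈ U₂} := hD ν
      _ ≤ (∫⁻ ν : sphere (0 : E3) 1,
            (volume {t : ℝ | t ∈ Ioi 0 ∧ t • (ν : E3) ∈ U₁}
              + volume {t : ℝ | t ∈ Ioi 0 ∧ t • (ν : E3) ∈ U₂}) ∂σ) / σ univ := hν
      _ ≤ ENNReal.ofReal (2 * ρ) * σ univ / σ univ :=
          ENNReal.div_le_div_right htotal _
      _ = ENNReal.ofReal (2 * ρ) := by rw [mul_div_assoc, ENNReal.div_self hσ0 hσfin, mul_one]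
  calc volume {t : ℝ | t ∈ Set.Ioo (-r) r ∧ x₀ + t • (ν : E3) ∈ S}
      ≤ ENNReal.ofReal (2 * ρ) := hfinal
    _ = ENNReal.ofReal (δ ^ ((1:ℝ)/3) * (2 * r)) := by
        rw [hρdef]; ring_nf
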